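/- If polynomials p, q, r with deg p ≤ n₁, deg q ≤ n₂, deg r ≤ n₃ satisfy p(z)e^{-z} + q(z) + r(z)e^{z} = O(z^{n₁+n₂+n₃+2}) at z = 0 and p = 0, q = 0, or r = 0, then p = q = r = 0. (Normality: nonzero solutions have all three polynomials nonzero.) -/

import Mathlib

open Complex Polynomial Finset

noncomputable def Eop (c : ℂ) : Module.End ℂ (Polynomial ℂ) :=
  (Polynomial.derivative : Polynomial ℂ →ₗ[ℂ] Polynomial ℂ) + c • 1

lemma Eop_apply (c : ℂ) (a : Polynomial ℂ) :
    Eop c a = Polynomial.derivative a + c • a := by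
  simp [Eop]

lemma Eop_pow_eval (c : ℂ) (k : ℕ) (a : Polynomial ℂ) :
    ((Eop c ^ k) a).eval 0 =
      ∑ i ∈ range (k+1),
        (k.choose i : ℂ) * c ^ (k - i) * ((Polynomial.derivative)^[i] a).eval 0 := by
  have hcomm : Commute (Polynomial.derivative : Module.End ℂ (Polynomial ℂ)) (c • 1) :=
    (Commute.one_right _).smul_right c
  have hpow := hcomm.add_pow k
  rw [Eop, hpow, LinearMap.sum_apply, Polynomial.eval_finset_sum]
  refine Finset.sum_congr rfl fun i hi => ?_
  have : ((Polynomial.derivative : Module.End ℂ (Polynomial ℂ)) ^ i * (c • 1) ^ (k - i)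
      * (k.choose i : Module.End ℂ (Polynomial ℂ))) a
      = c ^ (k-i) • (k.choose i) • ((Polynomial.derivative)^[i] a) := by
    rw [Module.End.mul_apply, Module.End.mul_apply, Module.End.natCast_apply,
        _root_.smul_pow, one_pow, LinearMap.smul_apply, Module.End.one_apply,
        map_smul, map_nsmul, Module.End.pow_apply]
  rw [this]
  simp only [Polynomial.eval_smul, smul_eq_mul, nsmul_eq_mul, Polynomial.eval_mul, Polynomial.eval_natCast]
  ring

lemma triangular (c : ℂ) (m : ℕ) (a : Polynomial ℂ) (hd : a.natDegree ≤ m)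
    (h : ∀ j ≤ m, ((Eop c ^ j) a).eval 0 = 0) : a = 0 := by
  have key : ∀ i, i ≤ m → ((Polynomial.derivative)^[i] a).eval 0 = 0 := by
    intro i
    induction i using Nat.strong_induction_on with
    | _ i IH =>
      intro him
      have h0 := h i him
      rw [Eop_pow_eval, Finset.sum_range_succ] at h0
      have hz : ∀ j ∈ range i,
          (i.choose j : ℂ) * c ^ (i - j) * ((Polynomial.derivative)^[j] a).eval 0 = 0 := by
        intro j hj
        rw [IH j (mem_range.1 hj) (le_trans (Nat.le_of_lt (mem_range.1 hj)) him), mul_zero]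
      rw [Finset.sum_eq_zero hz, zero_add, Nat.choose_self, Nat.sub_self, pow_zero,
        Nat.cast_one, one_mul, one_mul] at h0
      exact h0
  ext n
  rcases le_or_gt n m with hn | hn
  · have := key n hn
    rw [← Polynomial.coeff_zero_eq_eval_zero, Polynomial.coeff_iterate_derivative] at this
    simp only [zero_add, Polynomial.coeff_zero] at this ⊢
    have hfac : (n.descFactorial n : ℂ) ≠ 0 := by
      simp [Nat.descFactorial_self, Nat.factorial_ne_zero]
    rw [nsmul_eq_mul] at this
    exact (mul_eq_zero.1 this).resolve_left hfac
  · simp [Polynomial.coeff_eq_zero_of_natDegree_lt (lt_of_le_of_lt hd hn)]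

lemma Eop_inj (c : ℂ) (hc : c ≠ 0) (a : Polynomial ℂ) (ha : Eop c a = 0) : a = 0 := by
  by_contra hne
  have h1 : Polynomial.derivative a = -(c • a) := by
    have h2 := Eop_apply c a
    rw [ha] at h2
    linear_combination -h2
  have hdeg : (Polynomial.derivative a).degree < a.degree :=
    Polynomial.degree_derivative_lt hne
  rw [h1, degree_neg, Polynomial.degree_smul_of_smul_regular] at hdeg
  · exact lt_irrefl _ hdeg
  · intro x y hxy
    have h3 : x = y ∨ c = 0 := by
      simpa [smul_smul, inv_mul_cancel₀ hc] using congrArg (fun z => c⁻¹ • z) hxy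
    exact h3.resolve_right hc


lemma Eop_natDegree (c : ℂ) (a : Polynomial ℂ) :
    (Eop c a).natDegree ≤ a.natDegree := by
  rw [Eop_apply]
  refine le_trans (Polynomial.natDegree_add_le _ _) ?_
  refine max_le (le_trans (Polynomial.natDegree_derivative_le a) (Nat.sub_le _ _)) ?_
  exact Polynomial.natDegree_smul_le c a

lemma Eop_pow_natDegree (c : ℂ) (k : ℕ) (a : Polynomial ℂ) :
    ((Eop c ^ k) a).natDegree ≤ a.natDegree := by
  induction k with
  | zero => simp
  | succ k ih =>
    rw [Module.End.pow_apply, Function.iterate_succ_apply']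
    refine le_trans (Eop_natDegree c _) ?_
    rw [← Module.End.pow_apply]
    exact ih

lemma Eop_pow_inj (c : ℂ) (hc : c ≠ 0) (k : ℕ) (a : Polynomial ℂ)
    (ha : (Eop c ^ k) a = 0) : a = 0 := by
  induction k generalizing a with
  | zero => simpa using ha
  | succ k ih =>
    rw [Module.End.pow_apply, Function.iterate_succ_apply'] at ha
    have h1 : (Eop c ^ k) a = 0 := by
      rw [Module.End.pow_apply]
      exact Eop_inj c hc _ ha
    exact ih a h1

/-- main two-exponential lemma: a + b e^{cz} vanishing to order m+n+2 forces a=b=0 -/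
lemma two_exp (c : ℂ) (hc : c ≠ 0) (m n : ℕ) (a b : Polynomial ℂ)
    (hda : a.natDegree ≤ m) (hdb : b.natDegree ≤ n)
    (h : ∀ k ≤ m + n + 1,
      ((Polynomial.derivative)^[k] a).eval 0 + ((Eop c ^ k) b).eval 0 = 0) :
    a = 0 ∧ b = 0 := by
  have hb : b = 0 := by
    have hs : ∀ j ≤ n, ((Eop c ^ j) ((Eop c ^ (m+1)) b)).eval 0 = 0 := by
      intro j hj
      have hk : m + 1 + j ≤ m + n + 1 := by omega
      have := h (m + 1 + j) hk
      rw [Polynomial.iterate_derivative_eq_zero (by omega : a.natDegree < m + 1 + j),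
        Polynomial.eval_zero, zero_add] at this
      rw [Module.End.pow_apply, Module.End.pow_apply, ← Function.iterate_add_apply,
        show j + (m+1) = m + 1 + j by omega, ← Module.End.pow_apply]
      exact this
    have hs0 : (Eop c ^ (m+1)) b = 0 :=
      triangular c n _ (le_trans (Eop_pow_natDegree c _ b) hdb) hs
    exact Eop_pow_inj c hc (m+1) b hs0
  have ha : a = 0 := by
    refine triangular 0 m a hda fun j hj => ?_
    have := h j (by omega)
    rw [hb] at this
    simp only [map_zero, Polynomial.eval_zero, add_zero] at this
    rw [Eop_pow_eval]
    rcases Nat.eq_zero_or_pos j with rfl | hjpos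
    · simpa using this
    · rw [Finset.sum_range_succ]
      have hz : ∀ i ∈ range j, (j.choose i : ℂ) * (0:ℂ) ^ (j - i) *
          ((Polynomial.derivative)^[i] a).eval 0 = 0 := by
        intro i hi
        rw [zero_pow (by have := mem_range.1 hi; omega : j - i ≠ 0)]
        ring
      rw [Finset.sum_eq_zero hz, zero_add, Nat.sub_self, pow_zero, Nat.choose_self]
      simpa using this
  exact ⟨ha, hb⟩

lemma hasDerivAt_term (a : Polynomial ℂ) (c z : ℂ) :
    HasDerivAt (fun w => a.eval w * Complex.exp (c * w))
      ((Eop c a).eval z * Complex.exp (c * z)) z := by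
  have h1 : HasDerivAt (fun w : ℂ => a.eval w) (a.derivative.eval z) z :=
    a.hasDerivAt z
  have h2 : HasDerivAt (fun w : ℂ => Complex.exp (c * w))
      (Complex.exp (c * z) * (c * 1)) z := ((hasDerivAt_id z).const_mul c).cexp
  have h3 := h1.mul h2
  refine h3.congr_deriv ?_
  rw [Eop_apply]
  simp only [Polynomial.eval_add, Polynomial.eval_smul, smul_eq_mul]
  ring

lemma iteratedDeriv_G (p q r : Polynomial ℂ) (k : ℕ) :
    iteratedDeriv k (fun z => p.eval z * Complex.exp ((-1) * z) + q.eval z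
        + r.eval z * Complex.exp (1 * z)) =
      fun z => ((Eop (-1) ^ k) p).eval z * Complex.exp ((-1) * z)
        + ((Eop 0 ^ k) q).eval z + ((Eop 1 ^ k) r).eval z * Complex.exp (1 * z) := by
  induction k with
  | zero => simp
  | succ k ih =>
    rw [iteratedDeriv_succ, ih]
    funext z
    have h1 := hasDerivAt_term ((Eop (-1) ^ k) p) (-1) z
    have h2 : HasDerivAt (fun w : ℂ => ((Eop 0 ^ k) q).eval w)
        ((Eop 0 ((Eop 0 ^ k) q)).eval z) z := by
      have := ((Eop 0 ^ k) q).hasDerivAt z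
      refine this.congr_deriv ?_
      simp [Eop_apply]
    have h3 := hasDerivAt_term ((Eop 1 ^ k) r) 1 z
    have h := (h1.add h2).add h3
    erw [h.deriv]
    have e1 : ∀ c : ℂ, (Eop c ^ (k+1)) = Eop c * (Eop c ^ k) := fun c => by
      rw [pow_succ']
    rw [e1, e1, e1, Module.End.mul_apply, Module.End.mul_apply, Module.End.mul_apply]

lemma Eop_zero_pow (k : ℕ) (a : Polynomial ℂ) :
    (Eop 0 ^ k) a = (Polynomial.derivative)^[k] a := by
  have h : Eop (0 : ℂ) = (Polynomial.derivative : Module.End ℂ (Polynomial ℂ)) := by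
    rw [Eop]; simp
  rw [h, Module.End.pow_apply]

lemma Eop_one_add (c : ℂ) : Eop (c + 1) = 1 + Eop c := by
  rw [Eop, Eop, add_smul, one_smul]
  abel

lemma binom_eval (c : ℂ) (k : ℕ) (a : Polynomial ℂ) :
    ((Eop (c+1) ^ k) a).eval 0 =
      ∑ i ∈ Finset.range (k+1), (k.choose i : ℂ) * ((Eop c ^ (k-i)) a).eval 0 := by
  rw [Eop_one_add, (Commute.one_left (Eop c)).add_pow k, LinearMap.sum_apply,
    Polynomial.eval_finset_sum]
  refine Finset.sum_congr rfl fun i hi => ?_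
  rw [one_pow, one_mul, Module.End.mul_apply, Module.End.natCast_apply, map_nsmul]
  simp [nsmul_eq_mul]

/-- Normality for type I Hermite–Padé approximation to the exponential:
if `p, q, r` with `deg p ≤ n₁`, `deg q ≤ n₂`, `deg r ≤ n₃` satisfy
`p(z)e^{-z} + q(z) + r(z)e^{z} = O(z^{n₁+n₂+n₃+2})` at `0` and one of them
vanishes identically, then all three vanish. -/
theorem typeI_hermite_pade_normal (n₁ n₂ n₃ : ℕ) (p q r : Polynomial ℂ)
    (hp : p.degree ≤ (n₁ : WithBot ℕ)) (hq : q.degree ≤ (n₂ : WithBot ℕ))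
    (hr : r.degree ≤ (n₃ : WithBot ℕ))
    (hvan : ∀ k < n₁ + n₂ + n₃ + 2,
      iteratedDeriv k
        (fun z => p.eval z * Complex.exp (-z) + q.eval z + r.eval z * Complex.exp z)
        0 = 0)
    (h0 : p = 0 ∨ q = 0 ∨ r = 0) : p = 0 ∧ q = 0 ∧ r = 0 := by
  have hp' : p.natDegree ≤ n₁ := Polynomial.natDegree_le_iff_degree_le.2 hp
  have hq' : q.natDegree ≤ n₂ := Polynomial.natDegree_le_iff_degree_le.2 hq
  have hr' : r.natDegree ≤ n₃ := Polynomial.natDegree_le_iff_degree_le.2 hr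
  have hFG : (fun z => p.eval z * Complex.exp (-z) + q.eval z + r.eval z * Complex.exp z)
      = (fun z => p.eval z * Complex.exp ((-1) * z) + q.eval z
          + r.eval z * Complex.exp (1 * z)) := by
    funext z; rw [neg_one_mul, one_mul]
  have hvan' : ∀ k < n₁ + n₂ + n₃ + 2, ((Eop (-1) ^ k) p).eval 0 + ((Eop 0 ^ k) q).eval 0
      + ((Eop 1 ^ k) r).eval 0 = 0 := by
    intro k hk
    have h := hvan k hk
    rw [hFG, iteratedDeriv_G] at h
    simpa using h
  rcases h0 with rfl | rfl | rfl
  · -- p = 0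
    have h2 : q = 0 ∧ r = 0 := by
      refine two_exp 1 one_ne_zero n₂ n₃ q r hq' hr' fun k hk => ?_
      have h := hvan' k (by omega)
      rw [map_zero, Polynomial.eval_zero, zero_add, Eop_zero_pow] at h
      exact h
    exact ⟨rfl, h2.1, h2.2⟩
  · -- q = 0
    have H : ∀ k < n₁ + n₂ + n₃ + 2,
        ((Eop (-1) ^ k) p).eval 0 + ((Eop 1 ^ k) r).eval 0 = 0 := by
      intro k hk
      have h := hvan' k hk
      rw [map_zero, Polynomial.eval_zero, add_zero] at h
      exact h
    have h2 : p = 0 ∧ r = 0 := by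
      refine two_exp 2 two_ne_zero n₁ n₃ p r hp' hr' fun k hk => ?_
      have b1 : ((Eop 0 ^ k) p).eval 0 =
          ∑ i ∈ Finset.range (k+1), (k.choose i : ℂ) * ((Eop (-1) ^ (k-i)) p).eval 0 := by
        have := binom_eval (-1) k p
        norm_num at this ⊢
        exact this
      have b2 : ((Eop 2 ^ k) r).eval 0 =
          ∑ i ∈ Finset.range (k+1), (k.choose i : ℂ) * ((Eop 1 ^ (k-i)) r).eval 0 := by
        have := binom_eval 1 k r
        norm_num at this ⊢
        exact this
      rw [← Eop_zero_pow, b1, b2, ← Finset.sum_add_distrib]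
      refine Finset.sum_eq_zero fun i hi => ?_
      rw [← mul_add, H (k - i) (by omega), mul_zero]
    exact ⟨h2.1, rfl, h2.2⟩
  · -- r = 0
    have h2 : q = 0 ∧ p = 0 := by
      refine two_exp (-1) (by norm_num) n₂ n₁ q p hq' hp' fun k hk => ?_
      have h := hvan' k (by omega)
      rw [map_zero, Polynomial.eval_zero, add_zero, Eop_zero_pow] at h
      linear_combination h
    exact ⟨h2.2, h2.1, rfl⟩
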